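/- Let X be a Banach space, let R be a nonempty collection of sequences in ℝⁿ, let f : ℝⁿ → X be bounded, continuous and R-multi-almost automorphic, and let K : ℝⁿ → [0, ∞) be measurable with sup_{t ∈ ℝⁿ} ∫_{I_t} K(t − η) dη < ∞, where I_t := (−∞, t₁] × ⋯ × (−∞, t_n] for t = (t₁, …, t_n). Then F(t) := ∫_{I_t} K(t − η) f(η) dη defines an R-multi-almost automorphic function F : ℝⁿ → X. -/

import Mathlib

open Filter Topology MeasureTheory
open scoped ENNReal NNReal

noncomputable section

/-- `f : ℝⁿ → X` is `R`-multi-almost automorphic. -/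
def MultiAA1 {n : ℕ} {X : Type*} [NormedAddCommGroup X]
    (R : Set (ℕ → EuclideanSpace ℝ (Fin n))) (f : EuclideanSpace ℝ (Fin n) → X) : Prop :=
  Continuous f ∧
  ∀ b ∈ R, ∃ k : ℕ → ℕ, StrictMono k ∧ ∃ fs : EuclideanSpace ℝ (Fin n) → X,
    (∀ t, Tendsto (fun l => f (t + b (k l))) atTop (𝓝 (fs t))) ∧
    (∀ t, Tendsto (fun l => fs (t - b (k l))) atTop (𝓝 (f t)))

/-- `I_t = (−∞, t₁] × ⋯ × (−∞, t_n]`. -/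
def It {n : ℕ} (t : EuclideanSpace ℝ (Fin n)) : Set (EuclideanSpace ℝ (Fin n)) :=
  {η | ∀ i, η i ≤ t i}

/-- the Volterra-type convolution `F(t) = ∫_{I_t} K(t − η) f(η) dη` of a
bounded continuous `R`-multi-almost automorphic function `f` with a nonnegative measurable
kernel satisfying (E1) is `R`-multi-almost automorphic. -/
theorem multiAA1_volterra_convolution {n : ℕ} {X : Type*}
    [NormedAddCommGroup X] [NormedSpace ℝ X] [CompleteSpace X]
    (R : Set (ℕ → EuclideanSpace ℝ (Fin n))) (hR : R.Nonempty)
    (f : EuclideanSpace ℝ (Fin n) → X)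
    (hfbdd : ∃ C : ℝ, ∀ t, ‖f t‖ ≤ C)
    (hfaa : MultiAA1 R f)
    (K : EuclideanSpace ℝ (Fin n) → ℝ)
    (hKmeas : Measurable K) (hKpos : ∀ s, 0 ≤ K s)
    (hE1 : (⨆ t : EuclideanSpace ℝ (Fin n),
      ∫⁻ η in It t, ENNReal.ofReal (K (t - η))) < ⊤) :
    MultiAA1 R (fun t => ∫ η in It t, K (t - η) • f η) := by
  classical
  obtain ⟨C₀, hC₀⟩ := hfbdd
  set C : ℝ := max C₀ 0 with hCdef
  have hC : ∀ t, ‖f t‖ ≤ C := fun t => (hC₀ t).trans (le_max_left _ _)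
  obtain ⟨hfc, hfR⟩ := hfaa
  -- measurability of the kernel translate
  have hKm : ∀ t : EuclideanSpace ℝ (Fin n), Measurable fun η : EuclideanSpace ℝ (Fin n) => K (t - η) :=
    fun t => hKmeas.comp (measurable_const.sub measurable_id)
  -- integrability of the kernel on `It t`
  have hKint : ∀ t : EuclideanSpace ℝ (Fin n), Integrable (fun η => K (t - η)) (volume.restrict (It t)) := by
    intro t
    refine ⟨(hKm t).aestronglyMeasurable, ?_⟩
    rw [hasFiniteIntegral_iff_ofReal (Eventually.of_forall fun η => hKpos _)]
    calc ∫⁻ η in It t, ENNReal.ofReal (K (t - η))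
        ≤ ⨆ s : EuclideanSpace ℝ (Fin n), ∫⁻ η in It s, ENNReal.ofReal (K (s - η)) :=
          le_iSup (fun s : EuclideanSpace ℝ (Fin n) => ∫⁻ η in It s, ENNReal.ofReal (K (s - η))) t
      _ < ⊤ := hE1
  -- translation identity
  have htrans : ∀ (g : EuclideanSpace ℝ (Fin n) → X) (t b : EuclideanSpace ℝ (Fin n)),
      ∫ η in It (t + b), K (t + b - η) • g η = ∫ η in It t, K (t - η) • g (η + b) := by
    intro g t b
    have hmp : MeasurePreserving (· + b) (volume : Measure (EuclideanSpace ℝ (Fin n))) volume :=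
      measurePreserving_add_right volume b
    have hemb : MeasurableEmbedding (· + b : EuclideanSpace ℝ (Fin n) → _) :=
      (MeasurableEquiv.addRight b).measurableEmbedding
    have h0 := hmp.setIntegral_preimage_emb hemb
      (fun η => K (t + b - η) • g η) (It (t + b))
    have hset : (· + b) ⁻¹' It (t + b) = It t := by
      ext η
      exact ⟨fun h i => le_of_add_le_add_right (h i), fun h i => add_le_add_left (h i) _⟩
    rw [← h0, hset]
    simp only [add_sub_add_right_eq_sub]
  -- dominated convergence machine
  have hDCT : ∀ (g : ℕ → EuclideanSpace ℝ (Fin n) → X) (g0 : EuclideanSpace ℝ (Fin n) → X) (t : EuclideanSpace ℝ (Fin n)),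
      (∀ l, AEStronglyMeasurable (g l) volume) → (∀ l s, ‖g l s‖ ≤ C) →
      (∀ s, Tendsto (fun l => g l s) atTop (𝓝 (g0 s))) →
      Tendsto (fun l => ∫ η in It t, K (t - η) • g l η) atTop
        (𝓝 (∫ η in It t, K (t - η) • g0 η)) := by
    intro g g0 t hgm hgb hgl
    refine tendsto_integral_filter_of_dominated_convergence (fun η => C * K (t - η))
      (Eventually.of_forall fun l =>
        ((hKm t).aestronglyMeasurable).smul ((hgm l).restrict))
      (Eventually.of_forall fun l => Eventually.of_forall fun η => ?_)
      ((hKint t).const_mul C)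
      (Eventually.of_forall fun η => Tendsto.const_smul (hgl η) (K (t - η)))
    rw [norm_smul, Real.norm_of_nonneg (hKpos _)]
    show K (t - η) * ‖g l η‖ ≤ C * K (t - η)
    rw [mul_comm C]
    exact mul_le_mul_of_nonneg_left (hgb l η) (hKpos _)
  constructor
  · -- continuity
    rw [continuous_iff_seqContinuous]
    intro u t₀ hu
    have hrepr : ∀ kk : ℕ, ∫ η in It (u kk), K (u kk - η) • f η
        = ∫ η in It t₀, K (t₀ - η) • f (η + (u kk - t₀)) := by
      intro kk
      have h1 : t₀ + (u kk - t₀) = u kk := by abel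
      have := htrans f t₀ (u kk - t₀)
      rwa [h1] at this
    have key := hDCT (fun kk => fun s => f (s + (u kk - t₀))) f t₀
      (fun kk => (hfc.comp (continuous_id.add continuous_const)).aestronglyMeasurable)
      (fun kk s => hC _)
      (fun s => by
        have h2 : Tendsto (fun kk => s + (u kk - t₀)) atTop (𝓝 s) := by
          simpa using tendsto_const_nhds.add (hu.sub_const t₀)
        exact (hfc.continuousAt.tendsto).comp h2)
    exact key.congr fun kk => (hrepr kk).symm
  · -- almost automorphy
    intro b hb
    obtain ⟨k, hk, fs, h1, h2⟩ := hfR b hb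
    have hfsm : StronglyMeasurable fs :=
      stronglyMeasurable_of_tendsto atTop
        (fun l => (hfc.comp (continuous_id.add continuous_const)).stronglyMeasurable)
        (tendsto_pi_nhds.mpr h1)
    have hfsb : ∀ s, ‖fs s‖ ≤ C := fun s =>
      le_of_tendsto ((h1 s).norm) (Eventually.of_forall fun l => hC _)
    refine ⟨k, hk, fun t => ∫ η in It t, K (t - η) • fs η, ?_, ?_⟩
    · intro t
      have key := hDCT (fun l => fun s => f (s + b (k l))) fs t
        (fun l => (hfc.comp (continuous_id.add continuous_const)).aestronglyMeasurable)
        (fun l s => hC _) h1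
      exact key.congr fun l => (htrans f t (b (k l))).symm
    · intro t
      have h3 : ∀ l, ∫ η in It (t - b (k l)), K (t - b (k l) - η) • fs η
          = ∫ η in It t, K (t - η) • fs (η - b (k l)) := by
        intro l
        have := htrans fs t (-b (k l))
        simpa [sub_eq_add_neg] using this
      have key := hDCT (fun l => fun s => fs (s - b (k l))) f t
        (fun l => (hfsm.comp_measurable
          (measurable_id.sub measurable_const)).aestronglyMeasurable)
        (fun l s => hfsb _) h2
      exact key.congr fun l => (h3 l).symm
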